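/- Let m ≥ 5 and n ≥ 4 be integers and let k = ⌊(m+1)/3⌋. Then ( Σ over all functions η : ZMod m → Finset(Fin n) such that η i ≠ ∅ for every i and η i ∩ η(i+1) = ∅ for every i, of (−1)^{(Σ_i card(η i)) − m} ) − 1 equals (−1)^{n·k+m}·(2^n − 3) if 3 divides m, and (−1)^{n·k+m} otherwise. (Equivalently, χ̃(Hom(C_m,K_n)) = (−1)^{nk−m}(2^n−3) if m = 3k and (−1)^{nk−m} if m = 3k±1.) -/

import Mathlib

open Classical

open Finset Matrix

namespace ChiCycleAux

variable {α : Type*} [Fintype α] [DecidableEq α]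

/-- Entries of matrix powers as sums over paths. -/
lemma sum_pow_mul (A : Matrix α α ℤ) : ∀ (ℓ : ℕ) (S : α) (φ : α → ℤ),
    (∑ T, (A ^ ℓ) S T * φ T) =
      ∑ c : Fin ℓ → α,
        (∏ i : Fin ℓ, A ((Fin.cons S c : Fin (ℓ+1) → α) i.castSucc)
            ((Fin.cons S c : Fin (ℓ+1) → α) i.succ))
          * φ ((Fin.cons S c : Fin (ℓ+1) → α) (Fin.last ℓ)) := by
  intro ℓ
  induction ℓ with
  | zero =>
      intro S φ
      simp [Matrix.one_apply]
  | succ ℓ ih =>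
      intro S φ
      rw [pow_succ']
      have lhs : (∑ T, (A * A ^ ℓ) S T * φ T)
          = ∑ U, A S U * ∑ T, (A ^ ℓ) U T * φ T := by
        simp only [Matrix.mul_apply, Finset.sum_mul, Finset.mul_sum, mul_assoc]
        rw [Finset.sum_comm]
      rw [lhs]
      simp only [ih]
      rw [← Equiv.sum_comp (Fin.consEquiv (fun _ : Fin (ℓ+1) => α))]
      rw [Fintype.sum_prod_type]
      refine Finset.sum_congr rfl fun U _ => ?_
      rw [Finset.mul_sum]
      refine Finset.sum_congr rfl fun c _ => ?_
      have hd : (Fin.consEquiv (fun _ : Fin (ℓ+1) => α)) (U, c)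
          = (Fin.cons U c : Fin (ℓ+1) → α) := rfl
      rw [hd]
      have hprod : (∏ i : Fin (ℓ+1),
            A ((Fin.cons S (Fin.cons U c) : Fin (ℓ+2) → α) i.castSucc)
              ((Fin.cons S (Fin.cons U c) : Fin (ℓ+2) → α) i.succ))
          = A S U * ∏ i : Fin ℓ, A ((Fin.cons U c : Fin (ℓ+1) → α) i.castSucc)
              ((Fin.cons U c : Fin (ℓ+1) → α) i.succ) := by
        rw [Fin.prod_univ_succ]
        have h0 : A ((Fin.cons S (Fin.cons U c) : Fin (ℓ+2) → α) (0 : Fin (ℓ+1)).castSucc)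
            ((Fin.cons S (Fin.cons U c) : Fin (ℓ+2) → α) (0 : Fin (ℓ+1)).succ) = A S U := by
          simp
        rw [h0]
        congr 1
      have hlast : (Fin.cons S (Fin.cons U c) : Fin (ℓ+2) → α) (Fin.last (ℓ+1))
          = (Fin.cons U c : Fin (ℓ+1) → α) (Fin.last ℓ) := by
        have h1 : Fin.last (ℓ+1) = (Fin.last ℓ).succ := rfl
        rw [h1, Fin.cons_succ]
      rw [hprod, hlast]
      ring

lemma snoc_succ {ℓ : ℕ} (η : Fin (ℓ+1) → α) (i : Fin (ℓ+1)) :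
    (Fin.snoc η (η 0) : Fin (ℓ+2) → α) i.succ = η (i + 1) := by
  by_cases h : i = Fin.last ℓ
  · subst h
    have h1 : (Fin.last ℓ).succ = Fin.last (ℓ+1) := rfl
    rw [h1, Fin.snoc_last, Fin.last_add_one]
  · have hv : (i + 1 : Fin (ℓ+1)).val = i.val + 1 := by
      rw [Fin.val_add_one]
      simp [h]
    have h2 : i.succ = (i + 1 : Fin (ℓ+1)).castSucc := by
      apply Fin.ext
      simp [hv]
    rw [h2, Fin.snoc_castSucc]


/-- Trace of a matrix power as a sum over cyclic sequences. -/
lemma trace_pow (A : Matrix α α ℤ) (ℓ : ℕ) :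
    (A ^ (ℓ+1)).trace =
      ∑ η : Fin (ℓ+1) → α, ∏ i : Fin (ℓ+1), A (η i) (η (i + 1)) := by
  have key : ∀ S : α, (A ^ (ℓ+1)) S S
      = ∑ c : Fin (ℓ+1) → α,
          (∏ i : Fin (ℓ+1), A ((Fin.cons S c : Fin (ℓ+2) → α) i.castSucc)
              ((Fin.cons S c : Fin (ℓ+2) → α) i.succ))
            * (if c (Fin.last ℓ) = S then 1 else 0) := by
    intro S
    have h := sum_pow_mul A (ℓ+1) S (fun T => if T = S then 1 else 0)
    have h2 : (∑ T, (A ^ (ℓ+1)) S T * (if T = S then 1 else 0)) = (A ^ (ℓ+1)) S S := by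
      simp [mul_ite]
    rw [h2] at h
    rw [h]
    refine Finset.sum_congr rfl fun c _ => ?_
    congr 2
  rw [Matrix.trace]
  simp only [Matrix.diag]
  simp only [key]
  rw [← Equiv.sum_comp (Fin.consEquiv (fun _ : Fin (ℓ+1) => α)), Fintype.sum_prod_type]
  refine Finset.sum_congr rfl fun S _ => ?_
  have hsplit : ∀ S : α,
      (∑ c : Fin (ℓ+1) → α,
          (∏ i : Fin (ℓ+1), A ((Fin.cons S c : Fin (ℓ+2) → α) i.castSucc)
              ((Fin.cons S c : Fin (ℓ+2) → α) i.succ))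
            * (if c (Fin.last ℓ) = S then 1 else 0))
      = ∑ c₀ : Fin ℓ → α,
          (∏ i : Fin (ℓ+1), A ((Fin.cons S (Fin.snoc c₀ S) : Fin (ℓ+2) → α) i.castSucc)
              ((Fin.cons S (Fin.snoc c₀ S) : Fin (ℓ+2) → α) i.succ)) := by
    intro S
    rw [← Equiv.sum_comp (Fin.snocEquiv (fun _ : Fin (ℓ+1) => α)), Fintype.sum_prod_type]
    rw [Finset.sum_comm]
    refine Finset.sum_congr rfl fun c₀ _ => ?_
    have hev : ∀ U : α, (Fin.snocEquiv (fun _ : Fin (ℓ+1) => α)) (U, c₀)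
        = (Fin.snoc c₀ U : Fin (ℓ+1) → α) := fun U => rfl
    simp only [hev, Fin.snoc_last]
    rw [Finset.sum_eq_single S]
    · simp
    · intro U _ hU
      simp [hU]
    · intro h; exact absurd (Finset.mem_univ S) h
  rw [hsplit]
  refine Finset.sum_congr rfl fun c₀ _ => ?_
  have hη : (Fin.cons S (Fin.snoc c₀ S) : Fin (ℓ+2) → α)
      = (Fin.snoc (Fin.cons S c₀) ((Fin.cons S c₀ : Fin (ℓ+1) → α) 0) : Fin (ℓ+2) → α) := by
    rw [Fin.cons_snoc_eq_snoc_cons]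
    simp
  rw [hη]
  have he : (Fin.consEquiv (fun _ : Fin (ℓ+1) => α)) (S, c₀)
      = (Fin.cons S c₀ : Fin (ℓ+1) → α) := rfl
  rw [he]
  refine Finset.prod_congr rfl fun i _ => ?_
  rw [Fin.snoc_castSucc, snoc_succ]

lemma trace_pow_zmod (A : Matrix α α ℤ) (m : ℕ) [NeZero m] :
    (A ^ m).trace = ∑ η : ZMod m → α, ∏ i : ZMod m, A (η i) (η (i + 1)) := by
  obtain ⟨ℓ, rfl⟩ : ∃ ℓ, m = ℓ + 1 := ⟨m - 1, (Nat.succ_pred_eq_of_pos (NeZero.pos m)).symm⟩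
  exact trace_pow A ℓ

end ChiCycleAux

namespace ChiCycle
open ChiCycleAux Finset

variable {n : ℕ}

/-- The transfer matrix. -/
def M (n : ℕ) : Matrix (Finset (Fin n)) (Finset (Fin n)) ℤ :=
  fun S T => if S ≠ ∅ ∧ T ≠ ∅ ∧ S ∩ T = ∅ then (-1) ^ (T.card - 1) else 0

lemma M_apply (S T : Finset (Fin n)) :
    M n S T = if S ≠ ∅ ∧ T ≠ ∅ ∧ S ∩ T = ∅ then (-1 : ℤ) ^ (T.card - 1) else 0 := rfl

lemma neg_one_pow_congr (a b : ℕ) (h : a % 2 = b % 2) : ((-1 : ℤ)) ^ a = (-1) ^ b := by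
  rcases Nat.even_or_odd a with ha | ha
  · have hb : Even b := by rw [Nat.even_iff]; rw [Nat.even_iff] at ha; omega
    rw [ha.neg_one_pow, hb.neg_one_pow]
  · have hb : Odd b := by rw [Nat.odd_iff]; rw [Nat.odd_iff] at ha; omega
    rw [ha.neg_one_pow, hb.neg_one_pow]

lemma inter_empty_iff (U C : Finset (Fin n)) : U ∩ C = ∅ ↔ U ⊆ Cᶜ := by
  constructor
  · intro h x hx
    rw [Finset.mem_compl]
    intro hxC
    have : x ∈ U ∩ C := Finset.mem_inter.mpr ⟨hx, hxC⟩
    rw [h] at this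
    exact absurd this (Finset.notMem_empty x)
  · intro h
    rw [Finset.eq_empty_iff_forall_notMem]
    intro x hx
    rw [Finset.mem_inter] at hx
    exact (Finset.mem_compl.mp (h hx.1)) hx.2

lemma inter_union_eq_empty (S T U : Finset (Fin n)) :
    U ∩ (S ∪ T) = ∅ ↔ (S ∩ U = ∅ ∧ U ∩ T = ∅) := by
  simp only [Finset.eq_empty_iff_forall_notMem, Finset.mem_inter, Finset.mem_union, not_and,
    not_or]
  constructor
  · intro h
    exact ⟨fun x hxS hxU => (h x hxU).1 hxS, fun x hxU => (h x hxU).2⟩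
  · intro h x hxU
    exact ⟨fun hxS => h.1 x hxS hxU, h.2 x hxU⟩

/-- Key summation: sum over nonempty `U` disjoint from `C`. -/
lemma sum_ne_empty_inter (C : Finset (Fin n)) :
    (∑ U : Finset (Fin n), if U ≠ ∅ ∧ U ∩ C = ∅ then ((-1 : ℤ)) ^ (U.card - 1) else 0)
      = if C = Finset.univ then 0 else 1 := by
  have hterm : ∀ U : Finset (Fin n),
      (if U ≠ ∅ ∧ U ∩ C = ∅ then ((-1 : ℤ)) ^ (U.card - 1) else 0)
        = -(if U ∩ C = ∅ then ((-1 : ℤ)) ^ U.card else 0) + (if U = ∅ then 1 else 0) := by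
    intro U
    by_cases h0 : U = ∅
    · subst h0; simp
    · have hc : 0 < U.card := Finset.card_pos.mpr (Finset.nonempty_iff_ne_empty.mpr h0)
      by_cases h1 : U ∩ C = ∅
      · obtain ⟨k, hk⟩ : ∃ k, U.card = k + 1 := ⟨U.card - 1, by omega⟩
        simp [h0, h1, hk, pow_succ]
      · simp [h0, h1]
  rw [Finset.sum_congr rfl (fun U _ => hterm U), Finset.sum_add_distrib]
  have h2 : (∑ U : Finset (Fin n), if U = ∅ then (1 : ℤ) else 0) = 1 := by simp
  have h3 : (∑ U : Finset (Fin n), -(if U ∩ C = ∅ then ((-1 : ℤ)) ^ U.card else 0))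
      = -(if C = Finset.univ then 1 else 0) := by
    rw [Finset.sum_neg_distrib]
    congr 1
    rw [← Finset.sum_filter]
    have hf : Finset.univ.filter (fun U : Finset (Fin n) => U ∩ C = ∅) = Cᶜ.powerset := by
      ext U
      simp [Finset.mem_powerset, inter_empty_iff]
    rw [hf, Finset.sum_powerset_neg_one_pow_card]
    congr 1
    simp [Finset.compl_eq_empty_iff]
  rw [h2, h3]
  split <;> ring

/-- Interval summation: sum over `B ⊆ U ⊆ Cᶜ`. -/
lemma sum_interval (B C : Finset (Fin n)) (hB : B ≠ ∅) :
    (∑ U : Finset (Fin n), if B ⊆ U ∧ U ∩ C = ∅ then ((-1 : ℤ)) ^ (U.card - 1) else 0)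
      = if B ∪ C = Finset.univ ∧ B ∩ C = ∅ then ((-1 : ℤ)) ^ (B.card - 1) else 0 := by
  by_cases hBC : B ∩ C = ∅
  · rw [← Finset.sum_filter]
    have himg : Finset.univ.filter (fun U : Finset (Fin n) => B ⊆ U ∧ U ∩ C = ∅)
        = ((B ∪ C)ᶜ).powerset.image (fun W => B ∪ W) := by
      ext U
      simp only [Finset.mem_filter, Finset.mem_univ, true_and, Finset.mem_image,
        Finset.mem_powerset]
      constructor
      · rintro ⟨h1, h2⟩
        refine ⟨U \ B, ?_, Finset.union_sdiff_of_subset h1⟩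
        intro x hx
        rw [Finset.mem_sdiff] at hx
        rw [Finset.mem_compl, Finset.mem_union]
        push_neg
        refine ⟨hx.2, ?_⟩
        intro hxC
        have hmem : x ∈ U ∩ C := Finset.mem_inter.mpr ⟨hx.1, hxC⟩
        rw [h2] at hmem
        exact absurd hmem (Finset.notMem_empty x)
      · rintro ⟨W, hW, rfl⟩
        refine ⟨Finset.subset_union_left, ?_⟩
        rw [Finset.eq_empty_iff_forall_notMem]
        intro x hx
        rw [Finset.mem_inter, Finset.mem_union] at hx
        rcases hx.1 with hxB | hxW
        · have : x ∈ B ∩ C := Finset.mem_inter.mpr ⟨hxB, hx.2⟩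
          rw [hBC] at this
          exact absurd this (Finset.notMem_empty x)
        · have := hW hxW
          rw [Finset.mem_compl, Finset.mem_union] at this
          exact this (Or.inr hx.2)
    rw [himg]
    have hinj : ∀ W₁ ∈ ((B ∪ C)ᶜ).powerset, ∀ W₂ ∈ ((B ∪ C)ᶜ).powerset,
        B ∪ W₁ = B ∪ W₂ → W₁ = W₂ := by
      intro W₁ h₁ W₂ h₂ h
      rw [Finset.mem_powerset] at h₁ h₂
      ext x
      constructor
      · intro hx
        have hxB : x ∉ B := by
          have := h₁ hx
          rw [Finset.mem_compl, Finset.mem_union] at this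
          exact fun hb => this (Or.inl hb)
        have : x ∈ B ∪ W₂ := h ▸ (Finset.mem_union.mpr (Or.inr hx))
        rcases Finset.mem_union.mp this with h' | h'
        · exact absurd h' hxB
        · exact h'
      · intro hx
        have hxB : x ∉ B := by
          have := h₂ hx
          rw [Finset.mem_compl, Finset.mem_union] at this
          exact fun hb => this (Or.inl hb)
        have : x ∈ B ∪ W₁ := h.symm ▸ (Finset.mem_union.mpr (Or.inr hx))
        rcases Finset.mem_union.mp this with h' | h'
        · exact absurd h' hxB
        · exact h'
    rw [Finset.sum_image hinj]
    obtain ⟨b, hb⟩ : ∃ b, B.card = b + 1 := by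
      have : 0 < B.card := Finset.card_pos.mpr (Finset.nonempty_iff_ne_empty.mpr hB)
      exact ⟨B.card - 1, by omega⟩
    have hcard : ∀ W ∈ ((B ∪ C)ᶜ).powerset, ((-1 : ℤ)) ^ ((B ∪ W).card - 1)
        = ((-1 : ℤ)) ^ b * ((-1 : ℤ)) ^ W.card := by
      intro W hW
      rw [Finset.mem_powerset] at hW
      have hdisj : Disjoint B W := by
        rw [Finset.disjoint_left]
        intro x hxB hxW
        have := hW hxW
        rw [Finset.mem_compl, Finset.mem_union] at this
        exact this (Or.inl hxB)
      rw [Finset.card_union_of_disjoint hdisj, ← pow_add]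
      congr 1
      omega
    rw [Finset.sum_congr rfl hcard, ← Finset.mul_sum,
      Finset.sum_powerset_neg_one_pow_card]
    have hiff : (B ∪ C)ᶜ = ∅ ↔ B ∪ C = Finset.univ := Finset.compl_eq_empty_iff _
    by_cases hU : B ∪ C = Finset.univ
    · rw [if_pos (hiff.mpr hU), if_pos ⟨hU, hBC⟩, hb]
      simp
    · rw [if_neg (fun h => hU (hiff.mp h)), if_neg (fun h => hU h.1)]
      ring
  · rw [if_neg (fun h => hBC h.2)]
    apply Finset.sum_eq_zero
    intro U _
    rw [if_neg]
    rintro ⟨h1, h2⟩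
    apply hBC
    rw [Finset.eq_empty_iff_forall_notMem]
    intro x hx
    rw [Finset.mem_inter] at hx
    have : x ∈ U ∩ C := Finset.mem_inter.mpr ⟨h1 hx.1, hx.2⟩
    rw [h2] at this
    exact absurd this (Finset.notMem_empty x)

lemma M2_apply (S T : Finset (Fin n)) :
    (M n ^ 2) S T = if S ≠ ∅ ∧ T ≠ ∅ then
        (if S ∪ T = Finset.univ then 0 else ((-1 : ℤ)) ^ (T.card - 1)) else 0 := by
  rw [sq, Matrix.mul_apply]
  by_cases hS : S = ∅
  · simp [M_apply, hS]
  by_cases hT : T = ∅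
  · simp [M_apply, hT]
  have hterm : ∀ U : Finset (Fin n), M n S U * M n U T
      = (if U ≠ ∅ ∧ U ∩ (S ∪ T) = ∅ then ((-1 : ℤ)) ^ (U.card - 1) else 0)
          * ((-1 : ℤ)) ^ (T.card - 1) := by
    intro U
    rw [M_apply, M_apply]
    simp only [inter_union_eq_empty]
    by_cases hU : U = ∅
    · simp [hU]
    by_cases h1 : S ∩ U = ∅ <;> by_cases h2 : U ∩ T = ∅ <;>
      simp [hS, hT, hU, h1, h2]
  rw [Finset.sum_congr rfl (fun U _ => hterm U), ← Finset.sum_mul, sum_ne_empty_inter]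
  simp only [hS, hT, ne_eq, not_false_iff, and_self, if_true]
  split <;> ring

lemma compl_subset_iff_union (S U : Finset (Fin n)) :
    Sᶜ ⊆ U ↔ S ∪ U = Finset.univ := by
  constructor
  · intro h
    rw [Finset.eq_univ_iff_forall]
    intro x
    rw [Finset.mem_union]
    by_cases hx : x ∈ S
    · exact Or.inl hx
    · exact Or.inr (h (Finset.mem_compl.mpr hx))
  · intro h x hx
    rw [Finset.mem_compl] at hx
    have : x ∈ S ∪ U := h ▸ Finset.mem_univ x
    rcases Finset.mem_union.mp this with h' | h'
    · exact absurd h' hx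
    · exact h'

lemma M3_apply (S T : Finset (Fin n)) :
    (M n ^ 3) S T
      = ((-1 : ℤ)) ^ (n - 1) * (if T = S ∧ S ≠ ∅ ∧ S ≠ Finset.univ then 1 else 0)
        + (if S ≠ ∅ ∧ S ≠ Finset.univ then (1 : ℤ) else 0)
          * (if T ≠ ∅ ∧ T ≠ Finset.univ then ((-1 : ℤ)) ^ (T.card - 1) else 0) := by
  have h3 : M n ^ 3 = M n ^ 2 * M n := by rw [← pow_succ]
  rw [h3, Matrix.mul_apply]
  by_cases hS : S = ∅
  · simp [M2_apply, hS]
  by_cases hT : T = ∅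
  · have hz : ∀ U : Finset (Fin n), (M n ^ 2) S U * M n U T = 0 := by
      intro U; rw [M_apply]; simp [hT]
    rw [Finset.sum_congr rfl (fun U _ => hz U)]
    have h1 : ¬(T = S ∧ S ≠ ∅ ∧ S ≠ Finset.univ) := fun h => hS (by rw [← h.1, hT])
    have h2 : ¬(T ≠ ∅ ∧ T ≠ Finset.univ) := fun h => h.1 hT
    simp [h1, h2]
  by_cases hSu : S = Finset.univ
  · subst hSu
    have hz : ∀ U : Finset (Fin n), (M n ^ 2) Finset.univ U * M n U T = 0 := by
      intro U
      rw [M2_apply]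
      simp
    rw [Finset.sum_congr rfl (fun U _ => hz U)]
    have h1 : ¬(T = Finset.univ ∧ (Finset.univ : Finset (Fin n)) ≠ ∅
        ∧ (Finset.univ : Finset (Fin n)) ≠ Finset.univ) := fun h => h.2.2 rfl
    simp [h1]
  have hcne : Sᶜ ≠ ∅ := fun h => hSu (by rwa [Finset.compl_eq_empty_iff] at h)
  have hne : ¬ Sᶜ ⊆ (∅ : Finset (Fin n)) := fun h =>
    hcne (Finset.subset_empty.mp h)
  have hterm : ∀ U : Finset (Fin n), (M n ^ 2) S U * M n U T
      = (if Sᶜ ⊆ U ∧ U ∩ T = ∅ then ((-1 : ℤ)) ^ (U.card - 1) else 0)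
            * (-((-1 : ℤ)) ^ (T.card - 1))
        + (if U ≠ ∅ ∧ U ∩ T = ∅ then ((-1 : ℤ)) ^ (U.card - 1) else 0)
            * ((-1 : ℤ)) ^ (T.card - 1) := by
    intro U
    rw [M2_apply, M_apply]
    by_cases hU : U = ∅
    · subst hU; simp [hne]
    by_cases h2 : U ∩ T = ∅
    · by_cases hsub : Sᶜ ⊆ U
      · have h4 : S ∪ U = Finset.univ := (compl_subset_iff_union S U).mp hsub
        simp only [hS, hT, hU, h2, hsub, h4, ne_eq, not_false_iff, and_self, if_true,
          if_pos, true_and, and_true]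
        ring
      · have h4 : S ∪ U ≠ Finset.univ := fun h => hsub ((compl_subset_iff_union S U).mpr h)
        simp only [hS, hT, hU, h2, hsub, h4, ne_eq, not_false_iff, and_self, if_true,
          if_false, true_and, and_true, false_and, and_false]
        ring
    · simp [h2, hU, hS, hT]
  rw [Finset.sum_congr rfl (fun U _ => hterm U), Finset.sum_add_distrib,
    ← Finset.sum_mul, ← Finset.sum_mul, sum_interval Sᶜ T hcne, sum_ne_empty_inter]
  have hcond : (Sᶜ ∪ T = Finset.univ ∧ Sᶜ ∩ T = ∅) ↔ T = S := by
    constructor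
    · rintro ⟨h1, h2⟩
      ext x
      constructor
      · intro hx
        by_contra hq
        have : x ∈ Sᶜ ∩ T := Finset.mem_inter.mpr ⟨Finset.mem_compl.mpr hq, hx⟩
        rw [h2] at this
        exact absurd this (Finset.notMem_empty x)
      · intro hx
        have : x ∈ Sᶜ ∪ T := h1 ▸ Finset.mem_univ x
        rcases Finset.mem_union.mp this with h' | h'
        · exact absurd hx (Finset.mem_compl.mp h')
        · exact h'
    · rintro rfl
      constructor
      · rw [Finset.eq_univ_iff_forall]
        intro x
        rw [Finset.mem_union, Finset.mem_compl]
        tauto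
      · rw [Finset.eq_empty_iff_forall_notMem]
        intro x hx
        rw [Finset.mem_inter, Finset.mem_compl] at hx
        exact hx.1 hx.2
  simp only [hcond]
  by_cases hTS : T = S
  · subst hTS
    have hc1 : 0 < T.card := Finset.card_pos.mpr (Finset.nonempty_iff_ne_empty.mpr hT)
    have hc2 : T.card < n := by
      have := Finset.card_lt_iff_ne_univ T |>.mpr hSu
      simpa using this
    have hcompl : Tᶜ.card = n - T.card := by
      rw [Finset.card_compl]
      simp
    have e1 : ((-1 : ℤ)) ^ (Tᶜ.card - 1) * ((-1 : ℤ)) ^ (T.card - 1)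
        = ((-1 : ℤ)) ^ (n - 2) := by
      rw [← pow_add]
      apply neg_one_pow_congr
      omega
    have e2 : ((-1 : ℤ)) ^ (n - 1) = -((-1 : ℤ)) ^ (n - 2) := by
      have : n - 1 = (n - 2) + 1 := by omega
      rw [this, pow_succ]
      ring
    simp only [if_pos rfl, hT, hSu, ne_eq, not_false_iff, and_self, if_true, true_and,
      and_true]
    rw [if_neg not_false]
    linear_combination (-1 : ℤ) * e1 - e2
  · by_cases hTu : T = Finset.univ
    · have h10 : ¬(Finset.univ = S) := fun h => hTS (hTu.trans h)
      simp [hTS, hTu, hT, hS, hSu, h10]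
    · simp [hTS, hTu, hT, hS, hSu]

lemma pow_apply_empty (k : ℕ) (T : Finset (Fin n)) : (M n ^ (k+1)) ∅ T = 0 := by
  rw [pow_succ', Matrix.mul_apply]
  apply Finset.sum_eq_zero
  intro U _
  rw [M_apply, if_neg (fun h => h.1 rfl), zero_mul]

lemma M_apply_univ (U : Finset (Fin n)) : M n U Finset.univ = 0 := by
  rw [M_apply, if_neg]
  rintro ⟨h1, _, h3⟩
  rw [Finset.inter_univ] at h3
  exact h1 h3

lemma pow_apply_univ (k : ℕ) (S : Finset (Fin n)) : (M n ^ (k+1)) S Finset.univ = 0 := by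
  rw [pow_succ, Matrix.mul_apply]
  apply Finset.sum_eq_zero
  intro U _
  rw [M_apply_univ, mul_zero]

lemma univ_ne_empty' (hn : 0 < n) : (Finset.univ : Finset (Fin n)) ≠ ∅ := by
  have : (Finset.univ : Finset (Fin n)).Nonempty := ⟨⟨0, hn⟩, Finset.mem_univ _⟩
  exact Finset.nonempty_iff_ne_empty.mp this

lemma neg_one_pow_pred (hn : 0 < n) : ((-1 : ℤ)) ^ n = -((-1 : ℤ)) ^ (n - 1) := by
  have h : n - 1 + 1 = n := by omega
  calc ((-1 : ℤ)) ^ n = ((-1 : ℤ)) ^ (n - 1 + 1) := by rw [h]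
    _ = ((-1 : ℤ)) ^ (n - 1) * (-1) := pow_succ _ _
    _ = -((-1 : ℤ)) ^ (n - 1) := by ring

lemma sum_v (hn : 0 < n) :
    (∑ S : Finset (Fin n), if S ≠ ∅ ∧ S ≠ Finset.univ then ((-1 : ℤ)) ^ (S.card - 1) else 0)
      = 1 + (-1) ^ n := by
  have hne : (Finset.univ : Finset (Fin n)) ≠ ∅ := univ_ne_empty' hn
  have hterm : ∀ S : Finset (Fin n),
      (if S ≠ ∅ ∧ S ≠ Finset.univ then ((-1 : ℤ)) ^ (S.card - 1) else 0)
        = (if S ≠ ∅ ∧ S ∩ (∅ : Finset (Fin n)) = ∅ then ((-1 : ℤ)) ^ (S.card - 1) else 0)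
          - (if S = Finset.univ then ((-1 : ℤ)) ^ (n - 1) else 0) := by
    intro S
    by_cases hSu : S = Finset.univ
    · subst hSu
      have hcard : (Finset.univ : Finset (Fin n)).card = n := by
        rw [Finset.card_univ, Fintype.card_fin]
      simp [hne, hcard]
    · simp [hSu, Finset.inter_empty]
  rw [Finset.sum_congr rfl (fun S _ => hterm S), Finset.sum_sub_distrib]
  have h1 : (∑ S : Finset (Fin n),
      if S ≠ ∅ ∧ S ∩ (∅ : Finset (Fin n)) = ∅ then ((-1 : ℤ)) ^ (S.card - 1) else 0) = 1 := by
    rw [sum_ne_empty_inter]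
    rw [if_neg (fun h => hne h.symm)]
  have h2 : (∑ S : Finset (Fin n), if S = Finset.univ then ((-1 : ℤ)) ^ (n - 1) else 0)
      = ((-1 : ℤ)) ^ (n - 1) := by simp
  rw [h1, h2, neg_one_pow_pred hn]
  ring

lemma sum_uv (hn : 0 < n) :
    (∑ S : Finset (Fin n), (if S ≠ ∅ ∧ S ≠ Finset.univ then (1 : ℤ) else 0)
      * (if S ≠ ∅ ∧ S ≠ Finset.univ then ((-1 : ℤ)) ^ (S.card - 1) else 0)) = 1 + (-1) ^ n := by
  rw [← sum_v hn]
  refine Finset.sum_congr rfl fun S _ => ?_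
  by_cases h : S ≠ ∅ ∧ S ≠ Finset.univ <;> simp [h]

lemma count_proper (hn : 0 < n) :
    (∑ S : Finset (Fin n), if S ≠ ∅ ∧ S ≠ Finset.univ then (1 : ℤ) else 0)
      = 2 ^ n - 2 := by
  have hne : (Finset.univ : Finset (Fin n)) ≠ ∅ := univ_ne_empty' hn
  have hterm : ∀ S : Finset (Fin n),
      (if S ≠ ∅ ∧ S ≠ Finset.univ then (1 : ℤ) else 0)
        = 1 - ((if S = ∅ then (1 : ℤ) else 0) + (if S = Finset.univ then (1 : ℤ) else 0)) := by
    intro S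
    by_cases h0 : S = ∅
    · subst h0
      have hx : ¬((∅ : Finset (Fin n)) = Finset.univ) := fun h => hne h.symm
      simp [hx]
    · by_cases h1 : S = Finset.univ
      · subst h1; simp [hne]
      · simp [h0, h1]
  rw [Finset.sum_congr rfl (fun S _ => hterm S), Finset.sum_sub_distrib,
    Finset.sum_add_distrib]
  have hconst : (∑ _S : Finset (Fin n), (1 : ℤ)) = 2 ^ n := by
    rw [Finset.sum_const, Finset.card_univ, Fintype.card_finset, Fintype.card_fin]
    simp
  have h1 : (∑ S : Finset (Fin n), if S = ∅ then (1 : ℤ) else 0) = 1 := by simp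
  have h2 : (∑ S : Finset (Fin n), if S = Finset.univ then (1 : ℤ) else 0) = 1 := by simp
  rw [hconst, h1, h2]
  ring

lemma M_mulvec_u (S : Finset (Fin n)) :
    (∑ T : Finset (Fin n), M n S T * (if T ≠ ∅ ∧ T ≠ Finset.univ then (1 : ℤ) else 0))
      = (if S ≠ ∅ ∧ S ≠ Finset.univ then (1 : ℤ) else 0) := by
  by_cases hS : S = ∅
  · subst hS
    rw [Finset.sum_eq_zero (fun T _ => by rw [M_apply, if_neg (fun h => h.1 rfl), zero_mul])]
    simp
  have hterm : ∀ T : Finset (Fin n),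
      M n S T * (if T ≠ ∅ ∧ T ≠ Finset.univ then (1 : ℤ) else 0)
        = if T ≠ ∅ ∧ T ∩ S = ∅ then ((-1 : ℤ)) ^ (T.card - 1) else 0 := by
    intro T
    rw [M_apply]
    by_cases hT : T = ∅
    · simp [hT]
    by_cases hTu : T = Finset.univ
    · subst hTu
      have h1 : Finset.univ ∩ S = S := Finset.univ_inter S
      have h2 : S ∩ Finset.univ = S := Finset.inter_univ S
      simp [hS, h1, h2]
    · by_cases hST : S ∩ T = ∅
      · have hTS : T ∩ S = ∅ := by rwa [Finset.inter_comm]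
        simp [hS, hT, hTu, hST, hTS]
      · have hTS : ¬ T ∩ S = ∅ := by rwa [Finset.inter_comm]
        simp [hS, hT, hTu, hST, hTS]
  rw [Finset.sum_congr rfl (fun T _ => hterm T), sum_ne_empty_inter]
  by_cases hSu : S = Finset.univ <;> simp [hS, hSu]

lemma pow_mulvec_u (k : ℕ) : ∀ S : Finset (Fin n),
    (∑ T : Finset (Fin n), (M n ^ k) S T * (if T ≠ ∅ ∧ T ≠ Finset.univ then (1 : ℤ) else 0))
      = (if S ≠ ∅ ∧ S ≠ Finset.univ then (1 : ℤ) else 0) := by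
  induction k with
  | zero =>
      intro S
      simp only [pow_zero, Matrix.one_apply]
      rw [Finset.sum_eq_single S]
      · simp
      · intro x _ hx
        rw [if_neg (fun h => hx h.symm), zero_mul]
      · intro h
        exact absurd (Finset.mem_univ S) h
  | succ k ih =>
      intro S
      rw [pow_succ']
      have lhs : (∑ T : Finset (Fin n), (M n * M n ^ k) S T
            * (if T ≠ ∅ ∧ T ≠ Finset.univ then (1 : ℤ) else 0))
          = ∑ U : Finset (Fin n), M n S U * ∑ T : Finset (Fin n), (M n ^ k) U T
            * (if T ≠ ∅ ∧ T ≠ Finset.univ then (1 : ℤ) else 0) := by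
        simp only [Matrix.mul_apply, Finset.sum_mul, Finset.mul_sum, mul_assoc]
        rw [Finset.sum_comm]
      rw [lhs]
      simp only [ih]
      exact M_mulvec_u S

lemma trace_M1 : (M n).trace = 0 := by
  rw [Matrix.trace]
  apply Finset.sum_eq_zero
  intro S _
  rw [Matrix.diag]
  rw [M_apply, if_neg]
  rintro ⟨h1, _, h3⟩
  rw [Finset.inter_self] at h3
  exact h1 h3

lemma trace_M2 (hn : 0 < n) : (M n ^ 2).trace = 1 + (-1) ^ n := by
  rw [Matrix.trace, ← sum_v hn]
  refine Finset.sum_congr rfl fun S _ => ?_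
  rw [Matrix.diag, M2_apply]
  by_cases hS : S = ∅
  · simp [hS]
  · by_cases hSu : S = Finset.univ
    · simp [hS, hSu, Finset.union_self]
    · simp [hS, hSu, Finset.union_self]

lemma trace_M3 (hn : 0 < n) :
    (M n ^ 3).trace = ((-1 : ℤ)) ^ (n - 1) * (2 ^ n - 2) + (1 + (-1) ^ n) := by
  rw [Matrix.trace]
  have hterm : ∀ S : Finset (Fin n), (M n ^ 3).diag S
      = ((-1 : ℤ)) ^ (n - 1) * (if S ≠ ∅ ∧ S ≠ Finset.univ then (1 : ℤ) else 0)
        + (if S ≠ ∅ ∧ S ≠ Finset.univ then (1 : ℤ) else 0)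
          * (if S ≠ ∅ ∧ S ≠ Finset.univ then ((-1 : ℤ)) ^ (S.card - 1) else 0) := by
    intro S
    rw [Matrix.diag, M3_apply]
    congr 2
    by_cases h : S ≠ ∅ ∧ S ≠ Finset.univ <;> simp [h]
  rw [Finset.sum_congr rfl (fun S _ => hterm S), Finset.sum_add_distrib, ← Finset.mul_sum,
    count_proper hn, sum_uv hn]

lemma trace_rec (hn : 0 < n) (k : ℕ) :
    (M n ^ (k+4)).trace = ((-1 : ℤ)) ^ (n - 1) * (M n ^ (k+1)).trace + (1 + (-1) ^ n) := by
  have hsplit : M n ^ (k+4) = M n ^ (k+1) * M n ^ 3 := by rw [← pow_add]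
  rw [hsplit, Matrix.trace]
  have hterm : ∀ S : Finset (Fin n), (M n ^ (k+1) * M n ^ 3).diag S
      = ((-1 : ℤ)) ^ (n - 1) * ((M n ^ (k+1)) S S
            * (if S ≠ ∅ ∧ S ≠ Finset.univ then (1 : ℤ) else 0))
        + (∑ T : Finset (Fin n), (M n ^ (k+1)) S T
            * (if T ≠ ∅ ∧ T ≠ Finset.univ then (1 : ℤ) else 0))
          * (if S ≠ ∅ ∧ S ≠ Finset.univ then ((-1 : ℤ)) ^ (S.card - 1) else 0) := by
    intro S
    rw [Matrix.diag, Matrix.mul_apply]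
    have h1 : ∀ T : Finset (Fin n), (M n ^ (k+1)) S T * (M n ^ 3) T S
        = ((-1 : ℤ)) ^ (n - 1) * (if T = S then (M n ^ (k+1)) S S
              * (if S ≠ ∅ ∧ S ≠ Finset.univ then (1 : ℤ) else 0) else 0)
          + ((M n ^ (k+1)) S T * (if T ≠ ∅ ∧ T ≠ Finset.univ then (1 : ℤ) else 0))
            * (if S ≠ ∅ ∧ S ≠ Finset.univ then ((-1 : ℤ)) ^ (S.card - 1) else 0) := by
      intro T
      rw [M3_apply]
      by_cases hTS : T = S
      · subst hTS
        by_cases h : T ≠ ∅ ∧ T ≠ Finset.univ <;> simp [h] <;> ring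
      · have : ¬(S = T ∧ T ≠ ∅ ∧ T ≠ Finset.univ) := fun h => hTS h.1.symm
        simp only [this, if_false, if_neg hTS]
        ring
    rw [Finset.sum_congr rfl (fun T _ => h1 T), Finset.sum_add_distrib, ← Finset.mul_sum,
      ← Finset.sum_mul]
    congr 2
    simp
  rw [Finset.sum_congr rfl (fun S _ => hterm S), Finset.sum_add_distrib, ← Finset.mul_sum]
  have h2 : (∑ S : Finset (Fin n), (M n ^ (k+1)) S S
      * (if S ≠ ∅ ∧ S ≠ Finset.univ then (1 : ℤ) else 0)) = (M n ^ (k+1)).trace := by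
    rw [Matrix.trace]
    refine Finset.sum_congr rfl fun S _ => ?_
    rw [Matrix.diag]
    by_cases h0 : S = ∅
    · subst h0; rw [pow_apply_empty]; simp
    by_cases h1 : S = Finset.univ
    · subst h1; rw [pow_apply_univ]; simp
    · simp [h0, h1]
  have h3 : (∑ S : Finset (Fin n), (∑ T : Finset (Fin n), (M n ^ (k+1)) S T
        * (if T ≠ ∅ ∧ T ≠ Finset.univ then (1 : ℤ) else 0))
      * (if S ≠ ∅ ∧ S ≠ Finset.univ then ((-1 : ℤ)) ^ (S.card - 1) else 0))
      = 1 + (-1) ^ n := by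
    rw [← sum_uv hn]
    refine Finset.sum_congr rfl fun S _ => ?_
    rw [pow_mulvec_u]
  rw [h2, h3]

lemma trace_val (hn : 4 ≤ n) : ∀ m : ℕ, 2 ≤ m →
    (M n ^ m).trace
      = 1 + (-1 : ℤ) ^ (n * ((m + 1) / 3) + m) * (if 3 ∣ m then (2 ^ n - 3 : ℤ) else 1) := by
  intro m
  induction m using Nat.strong_induction_on with
  | _ m ih =>
    intro hm
    have hn0 : 0 < n := by omega
    by_cases h2 : m = 2
    · subst h2
      rw [trace_M2 hn0]
      have hq : (2 + 1) / 3 = 1 := by norm_num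
      rw [hq, if_neg (by omega : ¬ (3 ∣ 2))]
      rw [neg_one_pow_congr (n * 1 + 2) n (by omega)]
      ring
    by_cases h3 : m = 3
    · subst h3
      rw [trace_M3 hn0]
      have hq : (3 + 1) / 3 = 1 := by norm_num
      rw [hq, if_pos (by omega : (3:ℕ) ∣ 3)]
      have e1 : ((-1 : ℤ)) ^ (n - 1) = -((-1 : ℤ)) ^ n := by
        have := neg_one_pow_pred (n := n) hn0
        linarith
      have e2 : ((-1 : ℤ)) ^ (n * 1 + 3) = -((-1 : ℤ)) ^ n := by
        rw [neg_one_pow_congr (n * 1 + 3) (n + 1) (by omega), pow_succ]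
        ring
      rw [e1, e2]
      ring
    by_cases h4 : m = 4
    · subst h4
      have hrec := trace_rec hn0 0
      rw [pow_one] at hrec
      rw [hrec, trace_M1]
      have hq : (4 + 1) / 3 = 1 := by norm_num
      rw [hq, if_neg (by omega : ¬ (3 ∣ 4))]
      rw [neg_one_pow_congr (n * 1 + 4) n (by omega)]
      ring
    · obtain ⟨k, rfl⟩ : ∃ k, m = k + 5 := ⟨m - 5, by omega⟩
      have hrec := trace_rec hn0 (k + 1)
      have hih := ih (k + 2) (by omega) (by omega)
      rw [hih] at hrec
      rw [hrec]
      have hdvd : (3 ∣ (k + 5)) ↔ (3 ∣ (k + 2)) := by omega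
      have hq : (k + 5 + 1) / 3 = (k + 2 + 1) / 3 + 1 := by omega
      have e3 : ((-1 : ℤ)) ^ (n - 1) * ((-1 : ℤ)) ^ (n * ((k + 2 + 1) / 3) + (k + 2))
          = ((-1 : ℤ)) ^ (n * ((k + 5 + 1) / 3) + (k + 5)) := by
        rw [← pow_add]
        apply neg_one_pow_congr
        rw [hq, Nat.mul_succ]
        generalize n * ((k + 2 + 1) / 3) = t
        omega
      have e4 := neg_one_pow_pred (n := n) hn0
      have hc : (if 3 ∣ (k + 2) then (2 ^ n - 3 : ℤ) else 1)
          = (if 3 ∣ (k + 5) then (2 ^ n - 3 : ℤ) else 1) := by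
        by_cases h : 3 ∣ (k + 5)
        · rw [if_pos h, if_pos (hdvd.mp h)]
        · rw [if_neg h, if_neg (fun hh => h (hdvd.mpr hh))]
      rw [← hc]
      linear_combination (if 3 ∣ (k + 2) then (2 ^ n - 3 : ℤ) else 1) * e3 + e4

lemma conv (m : ℕ) [NeZero m] :
    (∑ η ∈ Finset.univ.filter (fun η : ZMod m → Finset (Fin n) =>
        (∀ i, η i ≠ ∅) ∧ ∀ i, η i ∩ η (i + 1) = ∅),
      (-1 : ℤ) ^ ((∑ i, (η i).card) - m))
      = ∑ η : ZMod m → Finset (Fin n), ∏ i : ZMod m, M n (η i) (η (i + 1)) := by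
  rw [Finset.sum_filter]
  refine Finset.sum_congr rfl fun η _ => ?_
  by_cases hP : (∀ i, η i ≠ ∅) ∧ ∀ i, η i ∩ η (i + 1) = ∅
  · rw [if_pos hP]
    have hfac : ∀ i : ZMod m, M n (η i) (η (i + 1))
        = ((-1 : ℤ)) ^ ((η (i + 1)).card - 1) := by
      intro i
      rw [M_apply, if_pos ⟨hP.1 i, hP.1 (i + 1), hP.2 i⟩]
    rw [Finset.prod_congr rfl (fun i _ => hfac i)]
    have hre : (∏ i : ZMod m, ((-1 : ℤ)) ^ ((η (i + 1)).card - 1))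
        = ∏ i : ZMod m, ((-1 : ℤ)) ^ ((η i).card - 1) :=
      Equiv.prod_comp (Equiv.addRight (1 : ZMod m)) (fun j => ((-1 : ℤ)) ^ ((η j).card - 1))
    rw [hre, Finset.prod_pow_eq_pow_sum]
    congr 1
    have hle : ∀ i ∈ (Finset.univ : Finset (ZMod m)), 1 ≤ (η i).card := fun i _ =>
      Finset.card_pos.mpr (Finset.nonempty_iff_ne_empty.mpr (hP.1 i))
    have hsub := Finset.sum_tsub_distrib (Finset.univ : Finset (ZMod m)) hle
    rw [hsub]
    congr 1
    rw [Finset.sum_const, Finset.card_univ, ZMod.card, smul_eq_mul, mul_one]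
  · rw [if_neg hP]
    rw [not_and_or] at hP
    rcases hP with hP | hP
    · push_neg at hP
      obtain ⟨i, hi⟩ := hP
      refine (Finset.prod_eq_zero (Finset.mem_univ i) ?_).symm
      rw [M_apply, if_neg (fun h => h.1 hi)]
    · push_neg at hP
      obtain ⟨i, hi⟩ := hP
      refine (Finset.prod_eq_zero (Finset.mem_univ i) ?_).symm
      rw [M_apply, if_neg (fun h => hi.ne_empty h.2.2)]

end ChiCycle


open ChiCycle ChiCycleAux in
/-- **Euler characteristic of `Hom(C_m,K_n)` (Corollary 6.4 / `crl:chi2`).**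
For `m ≥ 5`, `n ≥ 4` and `k = ⌊(m+1)/3⌋`,
`χ̃(Hom(C_m,K_n)) = (−1)^{nk−m}(2^n−3)` if `3 ∣ m`, and `(−1)^{nk−m}` otherwise.
The cells of `Hom(C_m,K_n)` are indexed by functions `η : ZMod m → Finset (Fin n)`
with nonempty values which are disjoint on cyclically adjacent vertices. -/
theorem cohomology_of_colorings_of_cycles_stmt3
    (m n : ℕ) [NeZero m] (hm : 5 ≤ m) (hn : 4 ≤ n) :
    (∑ η ∈ Finset.univ.filter (fun η : ZMod m → Finset (Fin n) =>
        (∀ i, η i ≠ ∅) ∧ ∀ i, η i ∩ η (i + 1) = ∅),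
      (-1 : ℤ) ^ ((∑ i, (η i).card) - m)) - 1
    = if 3 ∣ m then (-1 : ℤ) ^ (n * ((m + 1) / 3) + m) * (2 ^ n - 3)
      else (-1 : ℤ) ^ (n * ((m + 1) / 3) + m) := by
  have h1 : (∑ η ∈ Finset.univ.filter (fun η : ZMod m → Finset (Fin n) =>
        (∀ i, η i ≠ ∅) ∧ ∀ i, η i ∩ η (i + 1) = ∅),
      (-1 : ℤ) ^ ((∑ i, (η i).card) - m)) = (M n ^ m).trace := by
    rw [conv m, ← trace_pow_zmod (M n) m]
  rw [h1]
  have h2m : 2 ≤ m := le_trans (by norm_num) hm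
  rw [trace_val hn m h2m]
  by_cases hdvd : 3 ∣ m
  · rw [if_pos hdvd, if_pos hdvd]
    ring
  · rw [if_neg hdvd, if_neg hdvd]
    ring
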